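/- Let dp(P_n, 2) denote the number of partitions of the vertex set of the path P_n into exactly 2 dominating sets. Then dp(P_2,2) = dp(P_3,2) = 1 and for all n ≥ 4, dp(P_n,2) = dp(P_{n-1},2) + dp(P_{n-2},2); consequently dp(P_{n+1},2)/dp(P_n,2) → φ as n → ∞, where φ = (1+√5)/2. -/

import Mathlib

open SimpleGraph Filter

noncomputable def phi : ℝ := (1 + Real.sqrt 5) / 2

/-- `S` is a dominating set of `G`. -/
def IsDominatingSet {V : Type*} (G : SimpleGraph V) (S : Set V) : Prop :=
  ∀ v ∉ S, ∃ u ∈ S, G.Adj u v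

/-- `dp2 n` is the number of (unordered) partitions of the vertex set of the path
`Pₙ` into exactly two dominating sets: sets `A` with both `A` and `Aᶜ` dominating,
counted up to swapping `A` and `Aᶜ`. -/
noncomputable def dp2 (n : ℕ) : ℕ :=
  Nat.card {A : Set (Fin n) //
    IsDominatingSet (pathGraph n) A ∧ IsDominatingSet (pathGraph n) Aᶜ} / 2

/-! ### Auxiliary: weak 2-colorings of the path as boolean functions -/

/-- `f` is a weak 2-coloring of the path: every vertex has a neighbor of the other color. -/
def Ok (n : ℕ) (f : Fin n → Bool) : Prop :=
  ∀ i : Fin n, ∃ j : Fin n, ((j : ℕ) + 1 = i ∨ (i : ℕ) + 1 = j) ∧ f j ≠ f i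

instance (n : ℕ) : DecidablePred (Ok n) := fun _ => by unfold Ok; infer_instance

noncomputable def N (n : ℕ) : ℕ := Nat.card {f : Fin n → Bool // Ok n f}

lemma N2 : N 2 = 2 := by rw [N, Nat.card_eq_fintype_card]; decide
lemma N3 : N 3 = 2 := by rw [N, Nat.card_eq_fintype_card]; decide

open Classical in
lemma card_eq (n : ℕ) :
    Nat.card {A : Set (Fin n) //
      IsDominatingSet (pathGraph n) A ∧ IsDominatingSet (pathGraph n) Aᶜ} = N n := by
  apply Nat.card_congr
  refine Equiv.subtypeEquiv
    (⟨fun A v => decide (v ∈ A), fun f => {v | f v = true}, fun A => by ext v; simp,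
      fun f => by ext v; simp⟩ : Set (Fin n) ≃ (Fin n → Bool)) (fun A => ?_)
  simp only [Equiv.coe_fn_mk]
  constructor
  · rintro ⟨h1, h2⟩ i
    by_cases hi : i ∈ A
    · obtain ⟨u, hu, hadj⟩ := h2 i (by simpa using hi)
      rw [pathGraph_adj] at hadj
      exact ⟨u, hadj, by simp [hi, (Set.mem_compl_iff _ _).mp hu]⟩
    · obtain ⟨u, hu, hadj⟩ := h1 i hi
      rw [pathGraph_adj] at hadj
      exact ⟨u, hadj, by simp [hi, hu]⟩
  · intro h
    constructor
    · intro v hv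
      obtain ⟨j, hadj, hne⟩ := h v
      refine ⟨j, ?_, pathGraph_adj.mpr hadj⟩
      by_contra hj; simp [hj, hv] at hne
    · intro v hv
      have hv' : v ∈ A := by simpa using hv
      obtain ⟨j, hadj, hne⟩ := h v
      refine ⟨j, ?_, pathGraph_adj.mpr hadj⟩
      simp only [Set.mem_compl_iff]
      intro hj; simp [hj, hv'] at hne

lemma ok_last {n : ℕ} {f : Fin (n + 2) → Bool} (h : Ok (n + 2) f) :
    f ⟨n, by omega⟩ ≠ f ⟨n + 1, by omega⟩ := by
  obtain ⟨⟨jv, hjv⟩, hadj, hne⟩ := h ⟨n + 1, by omega⟩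
  simp only at hadj
  have : jv = n := by omega
  subst this
  exact hne

/-- extension used in case `f (k+1) ≠ f (k+2)` -/
def ext1 {k : ℕ} (g : Fin (k + 3) → Bool) : Fin (k + 4) → Bool :=
  fun i => if hc : (i : ℕ) < k + 3 then g ⟨i, hc⟩ else !g ⟨k + 2, by omega⟩

/-- extension used in case `f (k+1) = f (k+2)` -/
def ext2 {k : ℕ} (g : Fin (k + 2) → Bool) : Fin (k + 4) → Bool :=
  fun i => if hc : (i : ℕ) < k + 2 then g ⟨i, hc⟩
    else if (i : ℕ) = k + 2 then g ⟨k + 1, by omega⟩ else !g ⟨k + 1, by omega⟩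

lemma ok_res1 {k : ℕ} {f : Fin (k + 4) → Bool} (h : Ok (k + 4) f)
    (hne : f ⟨k + 1, by omega⟩ ≠ f ⟨k + 2, by omega⟩) :
    Ok (k + 3) (fun i => f ⟨i, by omega⟩) := by
  rintro ⟨iv, hiv⟩
  by_cases hik : iv = k + 2
  · subst hik
    exact ⟨⟨k + 1, by omega⟩, Or.inl rfl, hne⟩
  · obtain ⟨⟨jv, hjv⟩, hadj, hne'⟩ := h ⟨iv, by omega⟩
    simp only at hadj
    exact ⟨⟨jv, by omega⟩, hadj, hne'⟩

lemma ok_res2 {k : ℕ} {f : Fin (k + 4) → Bool} (h : Ok (k + 4) f)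
    (heq : f ⟨k + 1, by omega⟩ = f ⟨k + 2, by omega⟩) :
    Ok (k + 2) (fun i => f ⟨i, by omega⟩) := by
  rintro ⟨iv, hiv⟩
  by_cases hik : iv = k + 1
  · subst hik
    obtain ⟨⟨jv, hjv⟩, hadj, hne'⟩ := h ⟨k + 1, by omega⟩
    simp only at hadj
    have : jv = k ∨ jv = k + 2 := by omega
    rcases this with rfl | rfl
    · exact ⟨⟨jv, by omega⟩, Or.inl rfl, hne'⟩
    · exact absurd heq.symm hne'
  · obtain ⟨⟨jv, hjv⟩, hadj, hne'⟩ := h ⟨iv, by omega⟩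
    simp only at hadj
    exact ⟨⟨jv, by omega⟩, hadj, hne'⟩

lemma ok_ext1 {k : ℕ} {g : Fin (k + 3) → Bool} (h : Ok (k + 3) g) :
    Ok (k + 4) (ext1 g) := by
  have hlast := ok_last h
  rintro ⟨iv, hiv⟩
  by_cases h3 : iv = k + 3
  · subst h3
    refine ⟨⟨k + 2, by omega⟩, Or.inl rfl, ?_⟩
    simp only [ext1]
    rw [dif_pos (by omega : k + 2 < k + 3), dif_neg (by omega : ¬ (k + 3 < k + 3))]
    cases hb : g ⟨k + 2, by omega⟩ <;> simp [hb]
  · by_cases h2 : iv = k + 2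
    · subst h2
      refine ⟨⟨k + 3, by omega⟩, Or.inr rfl, ?_⟩
      simp only [ext1]
      rw [dif_neg (by omega : ¬ (k + 3 < k + 3)), dif_pos (by omega : k + 2 < k + 3)]
      cases hb : g ⟨k + 2, by omega⟩ <;> simp [hb]
    · obtain ⟨⟨jv, hjv⟩, hadj, hne'⟩ := h ⟨iv, by omega⟩
      simp only at hadj
      refine ⟨⟨jv, by omega⟩, hadj, ?_⟩
      simp only [ext1]
      rw [dif_pos (by omega : jv < k + 3), dif_pos (by omega : iv < k + 3)]
      exact hne'

lemma ok_ext2 {k : ℕ} {g : Fin (k + 2) → Bool} (h : Ok (k + 2) g) :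
    Ok (k + 4) (ext2 g) := by
  have hlast := ok_last h
  rintro ⟨iv, hiv⟩
  by_cases h3 : iv = k + 3
  · subst h3
    refine ⟨⟨k + 2, by omega⟩, Or.inl rfl, ?_⟩
    simp only [ext2]
    split_ifs <;> try omega
    cases hb : g ⟨k + 1, by omega⟩ <;> simp [hb]
  · by_cases h2 : iv = k + 2
    · subst h2
      refine ⟨⟨k + 3, by omega⟩, Or.inr rfl, ?_⟩
      simp only [ext2]
      split_ifs <;> try omega
      cases hb : g ⟨k + 1, by omega⟩ <;> simp [hb]
    · by_cases h1 : iv = k + 1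
      · subst h1
        refine ⟨⟨k, by omega⟩, Or.inl rfl, ?_⟩
        simp only [ext2]
        split_ifs <;> try omega
      · obtain ⟨⟨jv, hjv⟩, hadj, hne'⟩ := h ⟨iv, by omega⟩
        simp only at hadj
        refine ⟨⟨jv, by omega⟩, hadj, ?_⟩
        simp only [ext2]
        split_ifs <;> try omega

def e1 (k : ℕ) :
    {f : Fin (k + 4) → Bool // Ok (k + 4) f ∧ f ⟨k + 1, by omega⟩ ≠ f ⟨k + 2, by omega⟩} ≃
      {g : Fin (k + 3) → Bool // Ok (k + 3) g} where
  toFun f := ⟨fun i => f.1 ⟨i, by omega⟩, ok_res1 f.2.1 f.2.2⟩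
  invFun g := ⟨ext1 g.1, ok_ext1 g.2, by
    have := ok_last g.2
    simp only [ext1]
    split_ifs <;> try omega⟩
  left_inv := by
    rintro ⟨f, hf, hne⟩
    ext ⟨iv, hiv⟩
    simp only [ext1]
    split_ifs with hc
    · rfl
    · have h1 : iv = k + 3 := by omega
      subst h1
      have := ok_last hf
      cases hb : f ⟨k + 2, by omega⟩ <;> cases hb2 : f ⟨k + 3, by omega⟩ <;>
        simp_all
  right_inv := by
    rintro ⟨g, hg⟩
    ext ⟨iv, hiv⟩
    simp only [ext1]
    split_ifs <;> try omega
    rfl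

def e2 (k : ℕ) :
    {f : Fin (k + 4) → Bool // Ok (k + 4) f ∧ f ⟨k + 1, by omega⟩ = f ⟨k + 2, by omega⟩} ≃
      {g : Fin (k + 2) → Bool // Ok (k + 2) g} where
  toFun f := ⟨fun i => f.1 ⟨i, by omega⟩, ok_res2 f.2.1 f.2.2⟩
  invFun g := ⟨ext2 g.1, ok_ext2 g.2, by
    simp only [ext2]
    split_ifs <;> try omega
    rfl⟩
  left_inv := by
    rintro ⟨f, hf, heq⟩
    ext ⟨iv, hiv⟩
    simp only [ext2]
    split_ifs with hc hc2
    · rfl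
    · have h1 : iv = k + 2 := hc2
      subst h1
      exact heq
    · have h1 : iv = k + 3 := by omega
      subst h1
      have hlast : f ⟨k + 2, by omega⟩ ≠ f ⟨k + 3, by omega⟩ := ok_last hf
      have heq' : f ⟨k + 1, by omega⟩ = f ⟨k + 2, by omega⟩ := heq
      rw [heq']
      cases hb : f ⟨k + 2, by omega⟩ <;> cases hb2 : f ⟨k + 3, by omega⟩ <;>
        simp_all
  right_inv := by
    rintro ⟨g, hg⟩
    ext ⟨iv, hiv⟩
    simp only [ext2]
    split_ifs <;> try omega
    rfl

open Classical in
lemma N_rec (k : ℕ) : N (k + 4) = N (k + 3) + N (k + 2) := by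
  have hsplit : N (k + 4) =
      Nat.card {f : Fin (k + 4) → Bool //
        Ok (k + 4) f ∧ f ⟨k + 1, by omega⟩ ≠ f ⟨k + 2, by omega⟩} +
      Nat.card {f : Fin (k + 4) → Bool //
        Ok (k + 4) f ∧ f ⟨k + 1, by omega⟩ = f ⟨k + 2, by omega⟩} := by
    rw [N]
    rw [Nat.card_congr
      (Equiv.sumCompl (fun f : {f : Fin (k + 4) → Bool // Ok (k + 4) f} =>
        f.1 ⟨k + 1, by omega⟩ ≠ f.1 ⟨k + 2, by omega⟩)).symm]
    rw [Nat.card_sum]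
    congr 1
    · exact Nat.card_congr (Equiv.subtypeSubtypeEquivSubtypeInter (Ok (k + 4))
        (fun f => f ⟨k + 1, by omega⟩ ≠ f ⟨k + 2, by omega⟩))
    · exact Nat.card_congr
        ((Equiv.subtypeSubtypeEquivSubtypeInter (Ok (k + 4))
          (fun f => ¬ f ⟨k + 1, by omega⟩ ≠ f ⟨k + 2, by omega⟩)).trans
         (Equiv.subtypeEquivRight (fun f => by tauto)))
  rw [hsplit, Nat.card_congr (e1 k), Nat.card_congr (e2 k)]
  rfl

lemma N_fib : ∀ k, N (k + 2) = 2 * Nat.fib (k + 1) := by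
  intro k
  induction k using Nat.twoStepInduction with
  | zero => simpa using N2
  | one => simpa using N3
  | more n ih1 ih2 =>
    have h : N (n + 4) = N (n + 3) + N (n + 2) := N_rec n
    rw [show n + 2 + 2 = n + 4 by omega, h, ih1, ih2,
      show n + 2 + 1 = n + 1 + 2 by omega, Nat.fib_add_two (n := n + 1)]
    omega

lemma dp2_eq (k : ℕ) : dp2 (k + 2) = Nat.fib (k + 1) := by
  rw [dp2, card_eq, N_fib]
  omega

open Real goldenRatio in
lemma fib_ratio_tendsto :
    Tendsto (fun n => (Nat.fib (n + 1) : ℝ) / (Nat.fib n : ℝ)) atTop (nhds goldenRatio) := by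
  have habs : |goldenConj| < 1 :=
    abs_lt.mpr ⟨neg_one_lt_goldenConj, by linarith [goldenConj_neg]⟩
  have h0 : Tendsto (fun n => goldenConj ^ n / (Nat.fib n : ℝ)) atTop (nhds 0) := by
    have hbound : ∀ᶠ n in atTop, ‖goldenConj ^ n / (Nat.fib n : ℝ)‖ ≤ |goldenConj| ^ n := by
      filter_upwards [eventually_ge_atTop 1] with n hn
      have hfib : (1 : ℝ) ≤ (Nat.fib n : ℝ) := by
        exact_mod_cast Nat.one_le_iff_ne_zero.mpr (Nat.fib_pos.mpr (by omega)).ne'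
      rw [norm_div, norm_pow, Real.norm_eq_abs, Real.norm_eq_abs,
        abs_of_nonneg (by linarith : (0:ℝ) ≤ (Nat.fib n : ℝ))]
      exact div_le_self (by positivity) hfib
    exact squeeze_zero_norm' hbound (tendsto_pow_atTop_nhds_zero_of_abs_lt_one (by rwa [abs_abs]))
  have key : Tendsto (fun n => goldenRatio + goldenConj ^ n / (Nat.fib n : ℝ)) atTop
      (nhds goldenRatio) := by
    simpa using tendsto_const_nhds.add h0
  apply key.congr'
  filter_upwards [eventually_ge_atTop 1] with n hn
  have hfib : (0 : ℝ) < (Nat.fib n : ℝ) := by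
    exact_mod_cast Nat.fib_pos.mpr (by omega)
  have hb := fib_succ_sub_goldenRatio_mul_fib n
  have h1 : (Nat.fib (n + 1) : ℝ) = goldenRatio * (Nat.fib n : ℝ) + goldenConj ^ n := by
    linarith
  rw [h1, add_div, mul_div_cancel_right₀ _ hfib.ne']

theorem dp2_pathGraph :
    dp2 2 = 1 ∧ dp2 3 = 1 ∧
      (∀ n, 4 ≤ n → dp2 n = dp2 (n - 1) + dp2 (n - 2)) ∧
      Tendsto (fun n => (dp2 (n + 1) : ℝ) / (dp2 n : ℝ)) atTop (nhds phi) := by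
  refine ⟨by simpa using dp2_eq 0, by simpa using dp2_eq 1, ?_, ?_⟩
  · intro n hn
    obtain ⟨k, rfl⟩ : ∃ k, n = k + 4 := ⟨n - 4, by omega⟩
    have h1 : k + 4 - 1 = (k + 2) + 1 := by omega
    have h2 : k + 4 - 2 = k + 2 := by omega
    rw [h1, h2, show k + 4 = (k + 2) + 2 by omega, show (k + 2) + 1 = (k + 1) + 2 by omega,
      dp2_eq, dp2_eq, dp2_eq, show k + 2 + 1 = k + 3 by omega, Nat.fib_add_two]
    omega
  · have hphi : phi = Real.goldenRatio := rfl
    rw [hphi]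
    have hcomp : Tendsto (fun n : ℕ => (Nat.fib (n - 1 + 1) : ℝ) / (Nat.fib (n - 1) : ℝ))
        atTop (nhds Real.goldenRatio) := fib_ratio_tendsto.comp (tendsto_sub_atTop_nat 1)
    apply hcomp.congr'
    filter_upwards [eventually_ge_atTop 2] with n hn
    obtain ⟨k, rfl⟩ : ∃ k, n = k + 2 := ⟨n - 2, by omega⟩
    have h1 : k + 2 - 1 = k + 1 := by omega
    rw [h1, show k + 1 + 1 = k + 2 by omega, show k + 2 + 1 = (k + 1) + 2 by omega,
      dp2_eq, dp2_eq]
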